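/- Let A and B be positive invertible operators with sA ≤ B ≤ tA for scalars 0 < s ≤ t, and let α, β ∈ [0,1]. Then A ♯_β B ≤ μ (A !_α B), where μ = max{(1-α)t^β + α t^{-(1-β)}, (1-α)s^β + α s^{-(1-β)}}. -/

import Mathlib

open scoped ComplexOrder

/-- `A ^ r` for a Hermitian matrix, via the continuous functional calculus. -/
noncomputable def mpow {n : ℕ} (A : Matrix (Fin n) (Fin n) ℂ) (r : ℝ) : Matrix (Fin n) (Fin n) ℂ :=
  cfc (fun x : ℝ => x ^ r) A

/-- The β-weighted operator geometric mean `A ♯_β B = A^{1/2}(A^{-1/2} B A^{-1/2})^β A^{1/2}`. -/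
noncomputable def geomMean {n : ℕ} (A B : Matrix (Fin n) (Fin n) ℂ) (β : ℝ) :
    Matrix (Fin n) (Fin n) ℂ :=
  mpow A (1/2) * mpow (mpow A (-(1/2)) * B * mpow A (-(1/2))) β * mpow A (1/2)

/-- The α-weighted operator harmonic mean `A !_α B = ((1-α)A⁻¹ + αB⁻¹)⁻¹`. -/
noncomputable def harmMean {n : ℕ} (A B : Matrix (Fin n) (Fin n) ℂ) (α : ℝ) :
    Matrix (Fin n) (Fin n) ℂ :=
  ((1 - α) • A⁻¹ + α • B⁻¹)⁻¹

open Matrix in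
lemma aux_spec_pos {n : ℕ} {M : Matrix (Fin n) (Fin n) ℂ} (hM : M.PosDef) :
    ∀ x ∈ spectrum ℝ M, 0 < x := by
  intro x hx
  rw [hM.1.spectrum_real_eq_range_eigenvalues] at hx
  obtain ⟨i, rfl⟩ := hx
  exact hM.eigenvalues_pos i

open Matrix in
lemma aux_spec_bounds {n : ℕ} {M : Matrix (Fin n) (Fin n) ℂ} (hM : M.IsHermitian) {s t : ℝ}
    (hl : (M - s • 1).PosSemidef) (hu : (t • (1 : Matrix (Fin n) (Fin n) ℂ) - M).PosSemidef) :
    ∀ x ∈ spectrum ℝ M, x ∈ Set.Icc s t := by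
  intro x hx
  rw [hM.spectrum_real_eq_range_eigenvalues] at hx
  obtain ⟨i, rfl⟩ := hx
  have hvv : dotProduct (star ⇑(hM.eigenvectorBasis i)) ⇑(hM.eigenvectorBasis i) = 1 := by
    have h1 := hM.eigenvectorBasis.orthonormal.1 i
    have h2 := EuclideanSpace.inner_eq_star_dotProduct (𝕜 := ℂ)
      (hM.eigenvectorBasis i) (hM.eigenvectorBasis i)
    rw [inner_self_eq_norm_sq_to_K, h1] at h2
    simpa [dotProduct_comm] using h2.symm
  have hre : ∀ r : ℝ, RCLike.re (dotProduct (star ⇑(hM.eigenvectorBasis i))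
      ((r • (1 : Matrix (Fin n) (Fin n) ℂ)) *ᵥ ⇑(hM.eigenvectorBasis i))) = r := by
    intro r
    rw [Matrix.smul_mulVec, Matrix.one_mulVec, dotProduct_smul, hvv]
    simp [RCLike.smul_re]
  constructor
  · have h3 := hl.re_dotProduct_nonneg ⇑(hM.eigenvectorBasis i)
    rw [Matrix.sub_mulVec, dotProduct_sub, map_sub, hre s,
      ← hM.eigenvalues_eq i] at h3
    linarith
  · have h3 := hu.re_dotProduct_nonneg ⇑(hM.eigenvectorBasis i)
    rw [Matrix.sub_mulVec, dotProduct_sub, map_sub, hre t,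
      ← hM.eigenvalues_eq i] at h3
    linarith

lemma convexOn_exp_mul (c : ℝ) : ConvexOn ℝ Set.univ fun u : ℝ => Real.exp (c * u) := by
  have h := convexOn_exp.comp_affineMap (LinearMap.toAffineMap (c • (LinearMap.id : ℝ →ₗ[ℝ] ℝ)))
  simpa [Function.comp_def, smul_eq_mul] using h

lemma scalar_bound {s t α β : ℝ} (hs : 0 < s) (hα0 : 0 ≤ α) (hα1 : α ≤ 1)
    {x : ℝ} (hx : x ∈ Set.Icc s t) :
    (1 - α) * x ^ β + α * x ^ (β - 1) ≤
      max ((1 - α) * t ^ β + α * t ^ (β - 1)) ((1 - α) * s ^ β + α * s ^ (β - 1)) := by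
  obtain ⟨hsx, hxt⟩ := hx
  have hx0 : 0 < x := lt_of_lt_of_le hs hsx
  have ht0 : 0 < t := lt_of_lt_of_le hx0 hxt
  set g : ℝ → ℝ := fun u => (1 - α) * Real.exp (β * u) + α * Real.exp ((β - 1) * u) with hg
  have hgconv : ConvexOn ℝ Set.univ g := by
    have h1 := ((convexOn_exp_mul β).smul (show (0:ℝ) ≤ 1 - α by linarith)).add
      ((convexOn_exp_mul (β - 1)).smul hα0)
    exact h1
  have hseg : Real.log x ∈ segment ℝ (Real.log s) (Real.log t) := by
    rw [segment_eq_Icc (Real.log_le_log hs (le_trans hsx hxt))]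
    exact ⟨Real.log_le_log hs hsx, Real.log_le_log hx0 hxt⟩
  have key := hgconv.le_on_segment (Set.mem_univ (Real.log s)) (Set.mem_univ (Real.log t)) hseg
  have e1 : ∀ y : ℝ, 0 < y → g (Real.log y) = (1 - α) * y ^ β + α * y ^ (β - 1) := by
    intro y hy
    simp only [hg, Real.rpow_def_of_pos hy, mul_comm]
  rw [e1 x hx0, e1 s hs, e1 t ht0, max_comm] at key
  exact key

/-- If `0 < sA ≤ B ≤ tA`, then `A ♯_β B ≤ μ (A !_α B)`. -/
theorem geom_le_harm {n : ℕ} (A B : Matrix (Fin n) (Fin n) ℂ) (s t α β : ℝ)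
    (hA : A.PosDef) (hB : B.PosDef) (hs : 0 < s) (hst : s ≤ t)
    (hsA : (B - s • A).PosSemidef) (hBt : (t • A - B).PosSemidef)
    (hα0 : 0 ≤ α) (hα1 : α ≤ 1) (hβ0 : 0 ≤ β) (hβ1 : β ≤ 1) :
    (max ((1 - α) * t ^ β + α * t ^ (-(1 - β))) ((1 - α) * s ^ β + α * s ^ (-(1 - β)))
        • harmMean A B α - geomMean A B β).PosSemidef := by
  classical
  set μ : ℝ := max ((1 - α) * t ^ β + α * t ^ (-(1 - β)))
    ((1 - α) * s ^ β + α * s ^ (-(1 - β))) with hμ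
  have hAsa : IsSelfAdjoint A := hA.1.isSelfAdjoint
  have hσA : ∀ x ∈ spectrum ℝ A, 0 < x := aux_spec_pos hA
  have hcontA : ∀ f : ℝ → ℝ, ContinuousOn f (spectrum ℝ A) :=
    fun f => (Matrix.finite_real_spectrum (A := A)).continuousOn f
  set a : Matrix (Fin n) (Fin n) ℂ := mpow A (1/2) with ha
  set b : Matrix (Fin n) (Fin n) ℂ := mpow A (-(1/2)) with hb
  have hasa : IsSelfAdjoint a := cfc_predicate _ A
  have hbsa : IsSelfAdjoint b := cfc_predicate _ A
  have hab : a * b = 1 := by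
    rw [ha, hb, mpow, mpow, ← cfc_mul _ _ A (hcontA _) (hcontA _)]
    have h1 : cfc (fun x : ℝ => x ^ ((1:ℝ)/2) * x ^ (-((1:ℝ)/2))) A
        = cfc (fun _ : ℝ => (1:ℝ)) A := by
      apply cfc_congr
      intro x hx
      have hx0 := hσA x hx
      show x ^ ((1:ℝ)/2) * x ^ (-((1:ℝ)/2)) = 1
      rw [← Real.rpow_add hx0]
      norm_num
    rw [h1, cfc_const_one ℝ A hAsa]
  have hba : b * a = 1 := by
    rw [ha, hb, mpow, mpow, ← cfc_mul _ _ A (hcontA _) (hcontA _)]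
    have h1 : cfc (fun x : ℝ => x ^ (-((1:ℝ)/2)) * x ^ ((1:ℝ)/2)) A
        = cfc (fun _ : ℝ => (1:ℝ)) A := by
      apply cfc_congr
      intro x hx
      have hx0 := hσA x hx
      show x ^ (-((1:ℝ)/2)) * x ^ ((1:ℝ)/2) = 1
      rw [← Real.rpow_add hx0]
      norm_num
    rw [h1, cfc_const_one ℝ A hAsa]
  have haa : a * a = A := by
    rw [ha, mpow, ← cfc_mul _ _ A (hcontA _) (hcontA _)]
    have h1 : cfc (fun x : ℝ => x ^ ((1:ℝ)/2) * x ^ ((1:ℝ)/2)) A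
        = cfc (fun x : ℝ => x) A := by
      apply cfc_congr
      intro x hx
      have hx0 := hσA x hx
      show x ^ ((1:ℝ)/2) * x ^ ((1:ℝ)/2) = x
      rw [← Real.rpow_add hx0]
      norm_num
    rw [h1, cfc_id' ℝ A hAsa]
  have hAinv : A⁻¹ = b * b := by
    apply Matrix.inv_eq_right_inv
    rw [← haa, mul_assoc, ← mul_assoc a b b, hab, one_mul, hab]
  set C : Matrix (Fin n) (Fin n) ℂ := b * B * b with hCdef
  have hCsa : IsSelfAdjoint C := by
    rw [hCdef, IsSelfAdjoint, star_mul, star_mul, hbsa.star_eq, hB.1.isSelfAdjoint.star_eq,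
      mul_assoc]
  have hCh : C.IsHermitian := hCsa
  have hbab : b * A * b = 1 := by
    rw [← haa, ← mul_assoc b a a, hba, one_mul, hab]
  have hl : (C - s • (1 : Matrix (Fin n) (Fin n) ℂ)).PosSemidef := by
    have h2 := hsA.mul_mul_conjTranspose_same b
    have hbH : b.conjTranspose = b := hbsa.star_eq
    rw [hbH] at h2
    have h3 : b * (B - s • A) * b = C - s • 1 := by
      rw [mul_sub, sub_mul, mul_smul_comm, smul_mul_assoc, hbab, hCdef]
    rwa [h3] at h2
  have hu : (t • (1 : Matrix (Fin n) (Fin n) ℂ) - C).PosSemidef := by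
    have h2 := hBt.mul_mul_conjTranspose_same b
    have hbH : b.conjTranspose = b := hbsa.star_eq
    rw [hbH] at h2
    have h3 : b * (t • A - B) * b = t • 1 - C := by
      rw [mul_sub, sub_mul, mul_smul_comm, smul_mul_assoc, hbab, hCdef]
    rwa [h3] at h2
  have hσC : ∀ x ∈ spectrum ℝ C, x ∈ Set.Icc s t := aux_spec_bounds hCh hl hu
  have hσCpos : ∀ x ∈ spectrum ℝ C, 0 < x := fun x hx => lt_of_lt_of_le hs (hσC x hx).1
  have hcontC : ∀ f : ℝ → ℝ, ContinuousOn f (spectrum ℝ C) :=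
    fun f => (Matrix.finite_real_spectrum (A := C)).continuousOn f
  -- inverse of C via cfc
  set J : Matrix (Fin n) (Fin n) ℂ := cfc (fun x : ℝ => x⁻¹) C with hJ
  have hCJ : C * J = 1 := by
    rw [hJ]
    calc C * cfc (fun x : ℝ => x⁻¹) C
        = cfc (fun x : ℝ => x) C * cfc (fun x : ℝ => x⁻¹) C := by rw [cfc_id' ℝ C hCsa]
      _ = cfc (fun x : ℝ => x * x⁻¹) C := (cfc_mul _ _ C (hcontC _) (hcontC _)).symm
      _ = cfc (fun _ : ℝ => (1:ℝ)) C :=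
          cfc_congr fun x hx => mul_inv_cancel₀ (hσCpos x hx).ne'
      _ = 1 := cfc_const_one ℝ C hCsa
  have hBaca : a * C * a = B := by
    rw [hCdef, ← mul_assoc, ← mul_assoc, hab, one_mul, mul_assoc, hba, mul_one]
  have hBinv : B⁻¹ = b * J * b := by
    apply Matrix.inv_eq_right_inv
    simp only [← mul_assoc]
    rw [← hBaca, mul_assoc (a * C) a b, hab, mul_one, mul_assoc a C J, hCJ, mul_one, hab]
  -- the function e and its cfc
  set e : ℝ → ℝ := fun x => (1 - α) + α * x⁻¹ with he
  have hEpos : ∀ x ∈ spectrum ℝ C, 0 < e x := by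
    intro x hx
    have hx0 := hσCpos x hx
    rcases eq_or_lt_of_le hα1 with h | h
    · simp only [he, ← h]
      norm_num
      positivity
    · have : 0 ≤ α * x⁻¹ := by positivity
      simp only [he]
      nlinarith
  have hE : cfc e C = (1 - α) • (1 : Matrix (Fin n) (Fin n) ℂ) + α • J := by
    rw [he]
    have h1 : cfc (fun x : ℝ => (1 - α) + α * x⁻¹) C
        = cfc (fun _ : ℝ => (1 - α)) C + cfc (fun x : ℝ => α * x⁻¹) C :=
      cfc_add C _ _ (hcontC _) (hcontC _)
    rw [h1, cfc_const (1 - α) C hCsa, cfc_const_mul α _ C (hcontC _), ← hJ,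
      Algebra.algebraMap_eq_smul_one]
  have hsum : (1 - α) • A⁻¹ + α • B⁻¹ = b * cfc e C * b := by
    rw [hAinv, hBinv, hE]
    simp only [mul_add, add_mul, mul_smul_comm, smul_mul_assoc, mul_one, one_mul, mul_assoc]
  -- invert E
  have hEEinv : cfc e C * cfc (fun x => (e x)⁻¹) C = 1 := by
    rw [← cfc_mul _ _ C (hcontC _) (hcontC _)]
    have h1 : cfc (fun x : ℝ => e x * (e x)⁻¹) C = cfc (fun _ : ℝ => (1:ℝ)) C :=
      cfc_congr fun x hx => mul_inv_cancel₀ (hEpos x hx).ne'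
    rw [h1, cfc_const_one ℝ C hCsa]
  have hharm : harmMean A B α = a * cfc (fun x => (e x)⁻¹) C * a := by
    rw [harmMean, hsum]
    apply Matrix.inv_eq_right_inv
    simp only [← mul_assoc]
    rw [mul_assoc (b * cfc e C) b a, hba, mul_one, mul_assoc b (cfc e C) _, hEEinv, mul_one, hba]
  have hgeom : geomMean A B β = a * cfc (fun x : ℝ => x ^ β) C * a := by
    rw [geomMean, ← hb, ← hCdef, ← ha, mpow]
  -- nonnegativity of the key function
  set F : ℝ → ℝ := fun x => μ * (e x)⁻¹ - x ^ β with hF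
  have hFnonneg : ∀ x ∈ spectrum ℝ C, 0 ≤ F x := by
    intro x hx
    have hxm := hσC x hx
    have hx0 : 0 < x := hσCpos x hx
    have hex : 0 < e x := hEpos x hx
    have hb1 : x ^ β * e x = (1 - α) * x ^ β + α * x ^ (β - 1) := by
      have h2 : x ^ (β - 1) = x ^ β * x⁻¹ := by
        rw [Real.rpow_sub hx0, Real.rpow_one, div_eq_mul_inv]
      rw [h2, he]
      ring
    have hle : x ^ β * e x ≤ μ := by
      rw [hb1, hμ]
      simp only [neg_sub]
      exact scalar_bound hs hα0 hα1 hxm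
    rw [hF]
    have : x ^ β ≤ μ * (e x)⁻¹ := by
      rw [← div_eq_mul_inv]
      exact (le_div_iff₀ hex).mpr hle
    simp only [sub_nonneg]
    exact this
  have hkey : μ • harmMean A B α - geomMean A B β = a * cfc F C * a := by
    rw [hharm, hgeom]
    have h1 : cfc F C = μ • cfc (fun x => (e x)⁻¹) C - cfc (fun x : ℝ => x ^ β) C := by
      rw [hF]
      have h2 : cfc (fun x : ℝ => μ * (e x)⁻¹ - x ^ β) C
          = cfc (fun x : ℝ => μ * (e x)⁻¹) C - cfc (fun x : ℝ => x ^ β) C :=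
        cfc_sub _ _ C (hcontC _) (hcontC _)
      rw [h2, cfc_const_mul μ _ C (hcontC _)]
    rw [h1]
    simp only [mul_sub, sub_mul, mul_smul_comm, smul_mul_assoc, mul_assoc]
  rw [hkey]
  have hsq : cfc F C = (cfc (fun x => Real.sqrt (F x)) C).conjTranspose
      * cfc (fun x => Real.sqrt (F x)) C := by
    have hsa2 : IsSelfAdjoint (cfc (fun x => Real.sqrt (F x)) C) := cfc_predicate _ C
    have hct : (cfc (fun x => Real.sqrt (F x)) C).conjTranspose
        = cfc (fun x => Real.sqrt (F x)) C := hsa2.star_eq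
    rw [hct, ← cfc_mul _ _ C (hcontC _) (hcontC _)]
    exact cfc_congr fun x hx => (Real.mul_self_sqrt (hFnonneg x hx)).symm
  rw [hsq]
  have hps : ((cfc (fun x => Real.sqrt (F x)) C).conjTranspose
      * cfc (fun x => Real.sqrt (F x)) C).PosSemidef :=
    Matrix.posSemidef_conjTranspose_mul_self _
  have h5 := hps.mul_mul_conjTranspose_same a
  have hct2 : a.conjTranspose = a := hasa.star_eq
  rwa [hct2] at h5
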